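/- arXiv:1706.08253 — 2 statements merged into one kernel-verified Lean document; each statement's English description precedes it below -/
import Mathlib

section
/- Let μ be a finite Borel measure on ℝ^n with compact support, let Ω_1,…,Ω_p be closed subsets of ℝ^n with union Ω := ⋃_{i=1}^p Ω_i, and let f : ℝ^n → ℝ be continuous with f > 0 μ-almost everywhere on Ω. Consider the problem Q: maximize Σ_{i=1}^p ∫ f dφ_i over all p-tuples (φ_1,…,φ_p) of finite Borel measures satisfying φ_i(ℝ^n ∖ Ω_i) = 0 for each i and Σ_{i=1}^p φ_i ≤ μ. Then Q has an optimal solution, its optimal value equals ∫_Ω f dμ, and every optimal solution (φ*_1,…,φ*_p) satisfies Σ_{i=1}^p φ*_i = μ_Ω, the restriction of μ to Ω. -/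
open MeasureTheory Set

/-- For a finite Borel measure `μ` with compact support, closed sets `Ω_i` and a
continuous `f > 0` μ-a.e. on `Ω = ⋃ Ω_i`, the problem `Q` (maximize `Σ ∫ f dφ_i` over tuples
of finite measures `φ_i` carried by `Ω_i` with `Σ φ_i ≤ μ`) has an optimal solution, its
optimal value is `∫_Ω f dμ`, and every optimal solution satisfies `Σ φ*_i = μ_Ω`. -/
theorem stmt3 {n p : ℕ} (μ : Measure (Fin n → ℝ)) [IsFiniteMeasure μ]
    (hsupp : ∃ K : Set (Fin n → ℝ), IsCompact K ∧ μ Kᶜ = 0)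
    (Ω : Fin p → Set (Fin n → ℝ)) (hΩ : ∀ i, IsClosed (Ω i))
    (f : (Fin n → ℝ) → ℝ) (hf : Continuous f)
    (hfpos : ∀ᵐ x ∂(μ.restrict (⋃ i, Ω i)), 0 < f x) :
    (∃ φ : Fin p → Measure (Fin n → ℝ),
      (∀ i, IsFiniteMeasure (φ i)) ∧ (∀ i, φ i (Ω i)ᶜ = 0) ∧ (∑ i, φ i) ≤ μ ∧
      ∀ ψ : Fin p → Measure (Fin n → ℝ),
        (∀ i, IsFiniteMeasure (ψ i)) → (∀ i, ψ i (Ω i)ᶜ = 0) → (∑ i, ψ i) ≤ μ →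
        ∑ i, ∫ x, f x ∂(ψ i) ≤ ∑ i, ∫ x, f x ∂(φ i)) ∧
    sSup {r : ℝ | ∃ φ : Fin p → Measure (Fin n → ℝ),
        (∀ i, IsFiniteMeasure (φ i)) ∧ (∀ i, φ i (Ω i)ᶜ = 0) ∧ (∑ i, φ i) ≤ μ ∧
        r = ∑ i, ∫ x, f x ∂(φ i)}
      = ∫ x, f x ∂(μ.restrict (⋃ i, Ω i)) ∧
    (∀ φ : Fin p → Measure (Fin n → ℝ),
      (∀ i, IsFiniteMeasure (φ i)) → (∀ i, φ i (Ω i)ᶜ = 0) → (∑ i, φ i) ≤ μ →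
      (∑ i, ∫ x, f x ∂(φ i)) = ∫ x, f x ∂(μ.restrict (⋃ i, Ω i)) →
      (∑ i, φ i) = μ.restrict (⋃ i, Ω i)) := by
  classical
  obtain ⟨K, hK, hKμ⟩ := hsupp
  set S : Set (Fin n → ℝ) := ⋃ i, Ω i with hSdef
  have hSm : MeasurableSet S := MeasurableSet.iUnion fun i => (hΩ i).measurableSet
  -- integrability of f wrt any measure ≤ μ
  have hint : ∀ ξ : Measure (Fin n → ℝ), ξ ≤ μ → Integrable f ξ := by
    intro ξ hξ
    have : IsFiniteMeasure ξ := isFiniteMeasure_of_le μ hξ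
    have hξK : ξ Kᶜ = 0 :=
      le_antisymm ((Measure.le_iff'.mp hξ Kᶜ).trans hKμ.le) zero_le
    have hrestr : ξ.restrict K = ξ :=
      Measure.restrict_eq_self_of_ae_mem (by rw [ae_iff]; exact hξK)
    have h1 : IntegrableOn f K ξ := hf.continuousOn.integrableOn_compact hK
    rwa [IntegrableOn, hrestr] at h1
  -- key comparison lemma
  have key : ∀ ν : Measure (Fin n → ℝ), ν ≤ μ.restrict S →
      (∫ x, f x ∂ν ≤ ∫ x, f x ∂(μ.restrict S) ∧
        (∫ x, f x ∂ν = ∫ x, f x ∂(μ.restrict S) → ν = μ.restrict S)) := by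
    intro ν hν
    have hνfin : IsFiniteMeasure ν :=
      isFiniteMeasure_of_le _ (hν.trans Measure.restrict_le_self)
    set ρ : Measure (Fin n → ℝ) := μ.restrict S - ν with hρdef
    have hρle : ρ ≤ μ.restrict S := Measure.sub_le
    have hsum : ρ + ν = μ.restrict S := Measure.sub_add_cancel_of_le hν
    have hfiρ : Integrable f ρ := hint ρ (hρle.trans Measure.restrict_le_self)
    have hfiν : Integrable f ν := hint ν (hν.trans Measure.restrict_le_self)
    have hposρ : ∀ᵐ x ∂ρ, 0 < f x :=
      hfpos.filter_mono (Measure.absolutelyContinuous_of_le hρle).ae_le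
    have hintsum : ∫ x, f x ∂(μ.restrict S) = ∫ x, f x ∂ρ + ∫ x, f x ∂ν := by
      rw [← hsum, integral_add_measure hfiρ hfiν]
    have h0 : 0 ≤ ∫ x, f x ∂ρ :=
      integral_nonneg_of_ae (hposρ.mono fun x hx => hx.le)
    constructor
    · linarith
    · intro he
      have hρ0 : ρ = 0 := by
        by_contra hne
        have hρfin : IsFiniteMeasure ρ :=
          isFiniteMeasure_of_le _ (hρle.trans Measure.restrict_le_self)
        have hsuppae : ∀ᵐ x ∂ρ, x ∈ Function.support f :=
          hposρ.mono fun x hx => ne_of_gt hx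
        have h1 : 0 < ∫ x, f x ∂ρ := by
          rw [integral_pos_iff_support_of_nonneg_ae (hposρ.mono fun x hx => hx.le) hfiρ]
          have h2 : ρ (Function.support f) = ρ univ :=
            measure_congr (Filter.eventuallyEq_univ.mpr hsuppae)
          rw [h2]
          exact Measure.measure_univ_pos.mpr hne
        linarith
      rw [← hsum, hρ0, zero_add]
  -- any feasible ψ satisfies Σψ ≤ μ.restrict S
  have hsub : ∀ ψ : Fin p → Measure (Fin n → ℝ), (∀ i, ψ i (Ω i)ᶜ = 0) →
      (∑ i, ψ i) ≤ μ → (∑ i, ψ i) ≤ μ.restrict S := by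
    intro ψ hc hle
    have hν0 : (∑ i, ψ i) Sᶜ = 0 := by
      rw [Measure.finset_sum_apply]
      refine Finset.sum_eq_zero fun i _ => ?_
      exact measure_mono_null (compl_subset_compl.mpr (subset_iUnion Ω i)) (hc i)
    rw [Measure.le_iff]
    intro s hs
    calc (∑ i, ψ i) s ≤ (∑ i, ψ i) (s ∩ S) + (∑ i, ψ i) (s \ S) :=
          measure_le_inter_add_diff _ _ _
      _ = (∑ i, ψ i) (s ∩ S) := by
          rw [measure_mono_null (show s \ S ⊆ Sᶜ from fun x hx => hx.2) hν0, add_zero]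
      _ ≤ μ (s ∩ S) := Measure.le_iff'.mp hle _
      _ = μ.restrict S s := (Measure.restrict_apply hs).symm
  -- construction of the optimal solution
  set D : Fin p → Set (Fin n → ℝ) := fun i => Ω i \ ⋃ j, ⋃ (_ : j < i), Ω j with hDdef
  have hDm : ∀ i, MeasurableSet (D i) := fun i =>
    (hΩ i).measurableSet.diff
      (MeasurableSet.iUnion fun j => MeasurableSet.iUnion fun _ => (hΩ j).measurableSet)
  have hDsub : ∀ i, D i ⊆ Ω i := fun i => diff_subset
  have hDaux : ∀ i j : Fin p, i < j → Disjoint (D i) (D j) := by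
    intro i j h
    refine Set.disjoint_left.mpr fun x hxi hxj => ?_
    exact hxj.2 (mem_iUnion.mpr ⟨i, mem_iUnion.mpr ⟨h, hxi.1⟩⟩)
  have hDdisj : Pairwise (Function.onFun Disjoint D) := by
    intro i j hij
    rcases hij.lt_or_gt with h | h
    · exact hDaux i j h
    · exact (hDaux j i h).symm
  have hDunion : ⋃ i, D i = S := by
    apply Subset.antisymm (iUnion_mono hDsub)
    intro x hx
    obtain ⟨i0, hi0⟩ := mem_iUnion.mp hx
    obtain ⟨i, hi, hmin⟩ := wellFounded_lt.has_min {i | x ∈ Ω i} ⟨i0, hi0⟩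
    refine mem_iUnion.mpr ⟨i, hi, ?_⟩
    simp only [mem_iUnion, not_exists]
    intro j hj hxj
    exact hmin j hxj hj
  set φ : Fin p → Measure (Fin n → ℝ) := fun i => μ.restrict (D i) with hφdef
  have hφsum : (∑ i, φ i) = μ.restrict S := by
    ext s hs
    rw [Measure.finset_sum_apply]
    simp only [hφdef, Measure.restrict_apply hs]
    rw [← hDunion, inter_iUnion,
      measure_iUnion (hDdisj.mono fun a b h => h.mono inter_subset_right inter_subset_right)
        (fun i => hs.inter (hDm i)), tsum_fintype]
  have hφle : (∑ i, φ i) ≤ μ := hφsum ▸ Measure.restrict_le_self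
  have hφfin : ∀ i, IsFiniteMeasure (φ i) := fun i => by
    rw [hφdef]; infer_instance
  have hφc : ∀ i, φ i (Ω i)ᶜ = 0 := by
    intro i
    rw [hφdef]
    simp only
    rw [Measure.restrict_apply (hΩ i).measurableSet.compl]
    exact measure_mono_null (fun x hx => (hx.1 (hDsub i hx.2)).elim) measure_empty
  have hle_single : ∀ (ψ : Fin p → Measure (Fin n → ℝ)) (i : Fin p), ψ i ≤ ∑ j, ψ j := by
    intro ψ i
    refine Measure.le_iff'.mpr fun s => ?_
    rw [Measure.finset_sum_apply]
    exact Finset.single_le_sum (f := fun j => ψ j s) (fun j _ => zero_le) (Finset.mem_univ i)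
  have hval : ∑ i, ∫ x, f x ∂(φ i) = ∫ x, f x ∂(μ.restrict S) := by
    rw [← hφsum,
      integral_finset_sum_measure fun i _ => hint (φ i) ((hle_single φ i).trans hφle)]
  have hbound : ∀ ψ : Fin p → Measure (Fin n → ℝ), (∀ i, ψ i (Ω i)ᶜ = 0) →
      (∑ i, ψ i) ≤ μ → ∑ i, ∫ x, f x ∂(ψ i) ≤ ∫ x, f x ∂(μ.restrict S) := by
    intro ψ hc hle
    have h2 : ∑ i, ∫ x, f x ∂(ψ i) = ∫ x, f x ∂(∑ i, ψ i) :=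
      (integral_finset_sum_measure fun i _ => hint _ ((hle_single ψ i).trans hle)).symm
    rw [h2]
    exact (key _ (hsub ψ hc hle)).1
  refine ⟨⟨φ, hφfin, hφc, hφle, ?_⟩, ?_, ?_⟩
  · intro ψ _ hc hle
    rw [hval]
    exact hbound ψ hc hle
  · apply le_antisymm
    · refine csSup_le ⟨∑ i, ∫ x, f x ∂(φ i), ⟨φ, hφfin, hφc, hφle, rfl⟩⟩ ?_
      rintro r ⟨ψ, _, hc, hle, rfl⟩
      exact hbound ψ hc hle
    · refine le_csSup ⟨∫ x, f x ∂(μ.restrict S), ?_⟩ ⟨φ, hφfin, hφc, hφle, hval.symm⟩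
      rintro r ⟨ψ, _, hc, hle, rfl⟩
      exact hbound ψ hc hle
  · intro ψ _ hc hle heq
    have h2 : ∑ i, ∫ x, f x ∂(ψ i) = ∫ x, f x ∂(∑ i, ψ i) :=
      (integral_finset_sum_measure fun i _ => hint _ ((hle_single ψ i).trans hle)).symm
    exact (key _ (hsub ψ hc hle)).2 (by rw [← h2]; exact heq)
end

section
/- Let μ be a Borel measure on ℝ^n with all moments z_α = ∫ x^α dμ finite and let f ∈ ℝ[x₁,…,x_n]. Then for every d ≥ max(d_0, ⌈deg(f)/2⌉): (a) ρ^f_{d+1} ≤ ρ^f_d (the optimal values of the semidefinite programs Q_d are monotone non-increasing in d); and (b) ρ^f_d ≥ ∫_Ω f dμ — indeed, the truncated moment sequences of the measures φ*_i given by φ*_i(C) = ∫_C 1_{Ω_i}(x)/|{j : x ∈ Ω_j}| dμ(x) form a feasible solution of Q_d with objective value ∫_Ω f dμ. -/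
open MeasureTheory Filter

noncomputable section

/-- Multi-indices in `ℕ^n`. -/
abbrev MIdx (n : ℕ) := Fin n → ℕ

/-- Total degree `|α|` of a multi-index. -/
def mdeg {n : ℕ} (α : MIdx n) : ℕ := ∑ i, α i

instance instFintypeMIdxLe (n d : ℕ) : Fintype {α : MIdx n // mdeg α ≤ d} :=
  Fintype.ofInjective
    (fun α => (fun i => (⟨α.1 i,
      Nat.lt_succ_of_le ((Finset.single_le_sum (f := α.1)
        (fun _ _ => Nat.zero_le _) (Finset.mem_univ i)).trans α.2)⟩ : Fin (d+1))))
    (fun a b h => Subtype.ext (funext fun i => congrArg Fin.val (congrFun h i)))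

/-- The monomial function `x ↦ x^α`. -/
def mono {n : ℕ} (α : MIdx n) (x : Fin n → ℝ) : ℝ := ∏ i, x i ^ α i

/-- The moment sequence `z_α = ∫ x^α dμ` of a measure `μ`. -/
def momSeq {n : ℕ} (μ : Measure (Fin n → ℝ)) : MIdx n → ℝ := fun α => ∫ x, mono α x ∂μ

/-- The Riesz functional `L_y(f) = Σ_γ f_γ y_γ`. -/
def riesz {n : ℕ} (y : MIdx n → ℝ) (f : MvPolynomial (Fin n) ℝ) : ℝ :=
  ∑ γ ∈ f.support, MvPolynomial.coeff γ f * y (fun i => γ i)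

/-- The moment matrix `M_d(y)`, indexed by multi-indices of degree at most `d`. -/
def momMat {n : ℕ} (d : ℕ) (y : MIdx n → ℝ) :
    Matrix {α : MIdx n // mdeg α ≤ d} {α : MIdx n // mdeg α ≤ d} ℝ :=
  fun a b => y (fun i => a.1 i + b.1 i)

/-- The localizing matrix `M_d(g y)`. -/
def locMat {n : ℕ} (d : ℕ) (g : MvPolynomial (Fin n) ℝ) (y : MIdx n → ℝ) :
    Matrix {α : MIdx n // mdeg α ≤ d} {α : MIdx n // mdeg α ≤ d} ℝ :=
  fun a b => ∑ γ ∈ g.support, MvPolynomial.coeff γ g * y (fun i => a.1 i + b.1 i + γ i)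

/-- `r = ⌈deg(g)/2⌉`. -/
def halfDegUp {n : ℕ} (g : MvPolynomial (Fin n) ℝ) : ℕ := (g.totalDegree + 1) / 2

/-- The basic closed semi-algebraic set `Ω_i = {x : g_{ij}(x) ≥ 0, j = 1,…,m_i}`. -/
def Omg {n p : ℕ} {m : Fin p → ℕ} (g : ∀ i : Fin p, Fin (m i) → MvPolynomial (Fin n) ℝ)
    (i : Fin p) : Set (Fin n → ℝ) :=
  {x | ∀ j, 0 ≤ MvPolynomial.eval x (g i j)}

/-- Feasibility for the semidefinite program `Q_d`. -/
def QdFeas {n p : ℕ} {m : Fin p → ℕ} (g : ∀ i : Fin p, Fin (m i) → MvPolynomial (Fin n) ℝ)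
    (z : MIdx n → ℝ) (d : ℕ) (y : Fin p → MIdx n → ℝ) : Prop :=
  (momMat d (fun α => z α - ∑ i, y i α)).PosSemidef ∧
  (∀ i, (momMat d (y i)).PosSemidef) ∧
  (∀ i j, (locMat (d - halfDegUp (g i j)) (g i j) (y i)).PosSemidef)

/-- The optimal value `ρ^f_d` of the semidefinite program `Q_d`. -/
def QdVal {n p : ℕ} {m : Fin p → ℕ} (g : ∀ i : Fin p, Fin (m i) → MvPolynomial (Fin n) ℝ)
    (z : MIdx n → ℝ) (f : MvPolynomial (Fin n) ℝ) (d : ℕ) : ℝ :=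
  sSup {r | ∃ y : Fin p → MIdx n → ℝ, QdFeas g z d y ∧ r = ∑ i, riesz (y i) f}

/-- Sums of squares of polynomials. -/
def IsSOS {n : ℕ} (q : MvPolynomial (Fin n) ℝ) : Prop :=
  ∃ (k : ℕ) (h : Fin k → MvPolynomial (Fin n) ℝ), q = ∑ l, (h l) ^ 2

/-- Sums of squares of polynomials of degree at most `d` (the cone `Σ[x]_d`). -/
def IsSOSdeg {n : ℕ} (d : ℕ) (q : MvPolynomial (Fin n) ℝ) : Prop :=
  ∃ (k : ℕ) (h : Fin k → MvPolynomial (Fin n) ℝ),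
    (∀ l, (h l).totalDegree ≤ d) ∧ q = ∑ l, (h l) ^ 2

/-- Membership in the quadratic module `Q(g_1,…,g_m)`. -/
def InQM {n m : ℕ} (g : Fin m → MvPolynomial (Fin n) ℝ) (q : MvPolynomial (Fin n) ℝ) : Prop :=
  ∃ σ0 : MvPolynomial (Fin n) ℝ, IsSOS σ0 ∧ ∃ σ : Fin m → MvPolynomial (Fin n) ℝ,
    (∀ j, IsSOS (σ j)) ∧ q = σ0 + ∑ j, σ j * g j

/-- The quadratic module `Q(g_1,…,g_m)` is Archimedean. -/
def IsArch {n m : ℕ} (g : Fin m → MvPolynomial (Fin n) ℝ) : Prop :=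
  ∃ M : ℝ, 0 < M ∧ InQM g (MvPolynomial.C M - ∑ i, (MvPolynomial.X i) ^ 2)

/-- The number of sets `Ω_j` containing `x`. -/
def Ncount {n p : ℕ} (Ω : Fin p → Set (Fin n → ℝ)) (x : Fin n → ℝ) : ℕ :=
  Nat.card {j : Fin p // x ∈ Ω j}

/-- The density `θ_i(x) = 1_{Ω_i}(x)/|{j : x ∈ Ω_j}|`. -/
def theta {n p : ℕ} (Ω : Fin p → Set (Fin n → ℝ)) (i : Fin p) :
    (Fin n → ℝ) → ENNReal :=
  Set.indicator (Ω i) (fun x => ((Ncount Ω x : ENNReal))⁻¹)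

end

noncomputable section Aux

open MvPolynomial MeasureTheory

variable {n : ℕ}

lemma mono_add (a b : MIdx n) (x : Fin n → ℝ) :
    mono (fun i => a i + b i) x = mono a x * mono b x := by
  simp [mono, pow_add, Finset.prod_mul_distrib]

lemma measurable_mono (α : MIdx n) : Measurable (mono α) := by
  unfold mono
  exact Finset.measurable_prod _ fun i _ => (measurable_pi_apply i).pow_const (α i)

lemma eval_eq_sum (x : Fin n → ℝ) (q : MvPolynomial (Fin n) ℝ) :
    eval x q = ∑ γ ∈ q.support, coeff γ q * mono (fun i => γ i) x := by
  rw [eval_eq']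
  rfl

lemma mdeg_coe (γ : Fin n →₀ ℕ) : mdeg (fun i => γ i) = γ.sum fun _ e => e := by
  rw [Finsupp.sum_fintype _ _ (fun _ => rfl)]
  rfl

/-- Core positivity lemma: moment matrices of nonneg-weighted measures are PSD. -/
lemma posSemidef_momMat_weight {μ : Measure (Fin n → ℝ)} {w : (Fin n → ℝ) → ℝ}
    (hw0 : ∀ x, 0 ≤ w x)
    (hint : ∀ α : MIdx n, Integrable (fun x => w x * mono α x) μ) (d : ℕ) :
    (momMat d (fun α => ∫ x, w x * mono α x ∂μ)).PosSemidef := by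
  refine Matrix.posSemidef_iff_dotProduct_mulVec.2 ⟨?_, ?_⟩
  · ext a b
    have e : (fun i => b.1 i + a.1 i) = fun i => a.1 i + b.1 i := by
      funext i
      exact Nat.add_comm _ _
    simp only [Matrix.conjTranspose_apply, momMat, star_trivial, e]
  · intro v
    have hterm : ∀ (a b : {α : MIdx n // mdeg α ≤ d}),
        Integrable (fun x => v a * v b * (w x * mono (fun i => a.1 i + b.1 i) x)) μ :=
      fun a b => ((hint _).const_mul _)
    have key : ∫ x, w x * (∑ a : {α : MIdx n // mdeg α ≤ d}, v a * mono a.1 x)^2 ∂μ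
        = dotProduct (star v)
            ((momMat d (fun α => ∫ x, w x * mono α x ∂μ)).mulVec v) := by
      have e1 : ∀ x : Fin n → ℝ, w x * (∑ a : {α : MIdx n // mdeg α ≤ d}, v a * mono a.1 x)^2
          = ∑ a : {α : MIdx n // mdeg α ≤ d}, ∑ b : {α : MIdx n // mdeg α ≤ d},
              v a * v b * (w x * mono (fun i => a.1 i + b.1 i) x) := by
        intro x
        rw [sq, Finset.sum_mul_sum, Finset.mul_sum]
        refine Finset.sum_congr rfl fun a _ => ?_
        rw [Finset.mul_sum]
        refine Finset.sum_congr rfl fun b _ => ?_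
        rw [mono_add]
        ring
      simp_rw [e1]
      rw [integral_finset_sum _ (fun a _ => integrable_finset_sum _ (fun b _ => hterm a b))]
      simp only [dotProduct, Matrix.mulVec, star_trivial, momMat]
      refine Finset.sum_congr rfl fun a _ => ?_
      rw [integral_finset_sum _ (fun b _ => hterm a b), Finset.mul_sum]
      refine Finset.sum_congr rfl fun b _ => ?_
      rw [integral_const_mul]
      ring
    rw [← key]
    exact integral_nonneg fun x => mul_nonneg (hw0 x) (sq_nonneg _)

lemma locMat_eq_momMat {μ : Measure (Fin n → ℝ)} {w : (Fin n → ℝ) → ℝ}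
    (hint : ∀ α : MIdx n, Integrable (fun x => w x * mono α x) μ)
    (d' : ℕ) (q : MvPolynomial (Fin n) ℝ) :
    locMat d' q (fun α => ∫ x, w x * mono α x ∂μ)
      = momMat d' (fun α => ∫ x, (w x * eval x q) * mono α x ∂μ) := by
  ext a b
  simp only [locMat, momMat]
  have e1 : (fun x => (w x * eval x q) * mono (fun i => a.1 i + b.1 i) x)
      = fun x => ∑ γ ∈ q.support, coeff γ q * (w x * mono (fun i => a.1 i + b.1 i + γ i) x) := by
    funext x
    rw [eval_eq_sum x q, Finset.mul_sum, Finset.sum_mul]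
    refine Finset.sum_congr rfl fun γ _ => ?_
    have : mono (fun i => a.1 i + b.1 i + γ i) x
        = mono (fun i => a.1 i + b.1 i) x * mono (fun i => γ i) x :=
      mono_add (fun i => a.1 i + b.1 i) (fun i => γ i) x
    rw [this]
    ring
  rw [e1, integral_finset_sum _ (fun γ _ => (hint _).const_mul _)]
  refine Finset.sum_congr rfl fun γ _ => ?_
  rw [integral_const_mul]

lemma integrable_weight_mono {μ : Measure (Fin n → ℝ)}
    (hmom : ∀ α : MIdx n, Integrable (mono α) μ)
    {w : (Fin n → ℝ) → ℝ} (hw : Measurable w) (hb : ∀ x, |w x| ≤ 1) (α : MIdx n) :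
    Integrable (fun x => w x * mono α x) μ := by
  refine (hmom α).mono ((hw.mul (measurable_mono α)).aestronglyMeasurable) ?_
  filter_upwards with x
  rw [norm_mul]
  exact mul_le_of_le_one_left (norm_nonneg _) (by simpa [Real.norm_eq_abs] using hb x)

lemma integrable_weight_eval_mono {μ : Measure (Fin n → ℝ)}
    (hmom : ∀ α : MIdx n, Integrable (mono α) μ)
    {w : (Fin n → ℝ) → ℝ} (hw : Measurable w) (hb : ∀ x, |w x| ≤ 1)
    (q : MvPolynomial (Fin n) ℝ) (α : MIdx n) :
    Integrable (fun x => (w x * eval x q) * mono α x) μ := by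
  have e1 : (fun x => (w x * eval x q) * mono α x)
      = fun x => ∑ γ ∈ q.support, coeff γ q * (w x * mono (fun i => α i + γ i) x) := by
    funext x
    rw [eval_eq_sum x q, Finset.mul_sum, Finset.sum_mul]
    refine Finset.sum_congr rfl fun γ _ => ?_
    rw [mono_add α (fun i => γ i) x]
    ring
  rw [e1]
  exact integrable_finset_sum _ fun γ _ => (integrable_weight_mono hmom hw hb _).const_mul _

/-- Splitting a multi-index of degree ≤ 2d into two of degree ≤ d. -/
lemma mdeg_update (a : MIdx n) (i0 : Fin n) (c : ℕ) :
    mdeg (Function.update a i0 c) + a i0 = mdeg a + c := by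
  unfold mdeg
  rw [Finset.sum_update_of_mem (Finset.mem_univ i0),
    ← Finset.add_sum_erase _ a (Finset.mem_univ i0), Finset.erase_eq]
  omega

lemma split_exists (d : ℕ) : ∀ (k : ℕ) (γ : MIdx n), mdeg γ ≤ k → mdeg γ ≤ 2*d →
    ∃ a b : MIdx n, (∀ i, a i + b i = γ i) ∧ mdeg a ≤ d ∧ mdeg b ≤ d := by
  intro k
  induction k with
  | zero =>
    intro γ h0 _
    exact ⟨γ, fun _ => 0, fun i => rfl, h0.trans (Nat.zero_le d), by simp [mdeg]⟩
  | succ k IH =>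
    intro γ hk h2d
    by_cases hγ : mdeg γ ≤ d
    · exact ⟨γ, fun _ => 0, fun i => rfl, hγ, by simp [mdeg]⟩
    · push_neg at hγ
      obtain ⟨i0, hi0⟩ : ∃ i, 0 < γ i := by
        by_contra h
        push_neg at h
        have : mdeg γ = 0 := Finset.sum_eq_zero fun i _ => Nat.le_zero.mp (h i)
        omega
      set γ' := Function.update γ i0 (γ i0 - 1) with hγ'def
      have hupd := mdeg_update γ i0 (γ i0 - 1)
      rw [← hγ'def] at hupd
      have hmdeg' : mdeg γ' + 1 = mdeg γ := by omega
      obtain ⟨a, b, hab, ha, hb⟩ := IH γ' (by omega) (by omega)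
      have habsum : mdeg a + mdeg b = mdeg γ' := by
        unfold mdeg
        rw [← Finset.sum_add_distrib]
        exact Finset.sum_congr rfl fun i _ => hab i
      by_cases had : mdeg a < d
      · refine ⟨Function.update a i0 (a i0 + 1), b, fun i => ?_, ?_, hb⟩
        · by_cases hi : i = i0
          · rw [hi, Function.update_self]
            have h1 := hab i0
            rw [hγ'def, Function.update_self] at h1
            omega
          · rw [Function.update_of_ne hi]
            have h1 := hab i
            rwa [hγ'def, Function.update_of_ne hi] at h1
        · have := mdeg_update a i0 (a i0 + 1)
          omega
      · refine ⟨a, Function.update b i0 (b i0 + 1), fun i => ?_, ha, ?_⟩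
        · by_cases hi : i = i0
          · rw [hi, Function.update_self]
            have h1 := hab i0
            rw [hγ'def, Function.update_self] at h1
            omega
          · rw [Function.update_of_ne hi]
            have h1 := hab i
            rwa [hγ'def, Function.update_of_ne hi] at h1
        · have := mdeg_update b i0 (b i0 + 1)
          omega

lemma psd_diag_nonneg {N : Type*} [Fintype N] [DecidableEq N] {M : Matrix N N ℝ}
    (hM : M.PosSemidef) (a : N) : 0 ≤ M a a := by
  have h0 := (Matrix.posSemidef_iff_dotProduct_mulVec.1 hM).2 (Pi.single a 1)
  simpa [Matrix.mulVec_single, single_dotProduct] using h0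

lemma psd_abs_entry_le {N : Type*} [Fintype N] [DecidableEq N] {M : Matrix N N ℝ}
    (hM : M.PosSemidef) (a b : N) : |M a b| ≤ (M a a + M b b) / 2 := by
  have hsym : M b a = M a b := by
    have := congrFun (congrFun hM.1 a) b
    simpa [Matrix.conjTranspose_apply] using this
  have hq : ∀ c : ℝ, 0 ≤ M a a + c * M a b + c * M a b + c * c * M b b := by
    intro c
    have h0 := (Matrix.posSemidef_iff_dotProduct_mulVec.1 hM).2 (Pi.single a 1 + Pi.single b c)
    simp only [star_trivial, Matrix.mulVec_add, add_dotProduct, dotProduct_add,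
      Matrix.mulVec_single, single_dotProduct, Pi.smul_apply, MulOpposite.smul_eq_mul_unop,
      MulOpposite.unop_op, Matrix.col_apply] at h0
    -- h0 : 0 ≤ 1 * (M a a * 1) + 1 * (M a b * c) + (c * (M b a * 1) + c * (M b b * c))
    rw [hsym] at h0
    nlinarith [h0]
  have h1 := hq 1
  have h2 := hq (-1)
  rw [abs_le]
  constructor <;> nlinarith [h1, h2]

variable {p : ℕ}

lemma ncount_pos {Ω : Fin p → Set (Fin n → ℝ)} {i : Fin p} {x : Fin n → ℝ} (hx : x ∈ Ω i) :
    0 < Ncount Ω x := by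
  have : Nonempty {j // x ∈ Ω j} := ⟨⟨i, hx⟩⟩
  exact Nat.card_pos

/-- The real-valued density weight. -/
def wR (Ω : Fin p → Set (Fin n → ℝ)) (i : Fin p) (x : Fin n → ℝ) : ℝ :=
  Set.indicator (Ω i) (fun x => ((Ncount Ω x : ℝ))⁻¹) x

lemma wR_nonneg (Ω : Fin p → Set (Fin n → ℝ)) (i : Fin p) (x : Fin n → ℝ) : 0 ≤ wR Ω i x := by
  unfold wR
  by_cases hx : x ∈ Ω i
  · rw [Set.indicator_of_mem hx]
    positivity
  · rw [Set.indicator_of_notMem hx]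

lemma wR_le_one (Ω : Fin p → Set (Fin n → ℝ)) (i : Fin p) (x : Fin n → ℝ) : wR Ω i x ≤ 1 := by
  unfold wR
  by_cases hx : x ∈ Ω i
  · rw [Set.indicator_of_mem hx]
    have h1 : (1 : ℝ) ≤ (Ncount Ω x : ℝ) := by
      exact_mod_cast Nat.one_le_iff_ne_zero.2 (ncount_pos hx).ne'
    rw [inv_le_one_iff₀]
    right
    exact h1
  · rw [Set.indicator_of_notMem hx]
    norm_num

lemma abs_wR_le_one (Ω : Fin p → Set (Fin n → ℝ)) (i : Fin p) (x : Fin n → ℝ) : |wR Ω i x| ≤ 1 :=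
  abs_le.2 ⟨by linarith [wR_nonneg Ω i x], wR_le_one Ω i x⟩

lemma sum_wR (Ω : Fin p → Set (Fin n → ℝ)) (x : Fin n → ℝ) :
    ∑ i, wR Ω i x = Set.indicator (⋃ i, Ω i) (fun _ => (1:ℝ)) x := by
  classical
  by_cases hx : x ∈ ⋃ i, Ω i
  · obtain ⟨i0, hi0⟩ := Set.mem_iUnion.1 hx
    have hN : 0 < Ncount Ω x := ncount_pos hi0
    have hcard : Ncount Ω x = (Finset.univ.filter fun j => x ∈ Ω j).card := by
      rw [Ncount, Nat.card_eq_fintype_card, Fintype.card_subtype]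
    rw [Set.indicator_of_mem hx]
    have hterm : ∀ i, wR Ω i x = if x ∈ Ω i then ((Ncount Ω x : ℝ))⁻¹ else 0 := fun i => by
      simp [wR, Set.indicator_apply]
    simp_rw [hterm]
    rw [Finset.sum_ite, Finset.sum_const_zero, add_zero, Finset.sum_const, nsmul_eq_mul,
      ← hcard, mul_inv_cancel₀ (by exact_mod_cast hN.ne')]
  · rw [Set.indicator_of_notMem hx]
    refine Finset.sum_eq_zero fun i _ => ?_
    have hxi : x ∉ Ω i := fun h => hx (Set.mem_iUnion.2 ⟨i, h⟩)
    simp [wR, Set.indicator_of_notMem hxi]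

lemma measurable_ncount {Ω : Fin p → Set (Fin n → ℝ)} (hΩ : ∀ i, MeasurableSet (Ω i)) :
    Measurable fun x => Ncount Ω x := by
  classical
  have e1 : (fun x => Ncount Ω x) = fun x => ∑ j, (if x ∈ Ω j then 1 else 0) := by
    funext x
    rw [Ncount, Nat.card_eq_fintype_card, Fintype.card_subtype, Finset.sum_boole]
    simp
  rw [e1]
  exact Finset.measurable_sum _ fun j _ =>
    Measurable.ite (hΩ j) measurable_const measurable_const

lemma measurable_wR {Ω : Fin p → Set (Fin n → ℝ)} (hΩ : ∀ i, MeasurableSet (Ω i)) (i : Fin p) :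
    Measurable (wR Ω i) := by
  unfold wR
  exact Measurable.indicator
    ((measurable_from_nat (f := fun k : ℕ => ((k:ℝ))⁻¹)).comp (measurable_ncount hΩ)) (hΩ i)

lemma integral_withDensity_theta {μ : Measure (Fin n → ℝ)} {Ω : Fin p → Set (Fin n → ℝ)}
    (hΩ : ∀ i, MeasurableSet (Ω i)) (i : Fin p) (h : (Fin n → ℝ) → ℝ) :
    ∫ x, h x ∂(μ.withDensity (theta Ω i)) = ∫ x, wR Ω i x * h x ∂μ := by
  classical
  set θ' : (Fin n → ℝ) → NNReal :=
    fun x => Set.indicator (Ω i) (fun x => ((Ncount Ω x : NNReal))⁻¹) x with hθ'def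
  have hθm : Measurable θ' :=
    Measurable.indicator
      ((measurable_from_nat (f := fun k : ℕ => ((k:NNReal))⁻¹)).comp (measurable_ncount hΩ))
      (hΩ i)
  have hid : theta Ω i = fun x => ((θ' x : NNReal) : ENNReal) := by
    funext x
    by_cases hx : x ∈ Ω i
    · have hz : (Ncount Ω x : ℕ) ≠ 0 := (ncount_pos hx).ne'
      simp only [theta, hθ'def, Set.indicator_of_mem hx]
      rw [ENNReal.coe_inv (by exact_mod_cast hz)]
      norm_cast
    · simp [theta, hθ'def, Set.indicator_of_notMem hx]
  rw [hid, integral_withDensity_eq_integral_smul hθm]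
  congr 1
  funext x
  by_cases hx : x ∈ Ω i
  · simp [hθ'def, wR, Set.indicator_of_mem hx, NNReal.smul_def]
  · simp [hθ'def, wR, Set.indicator_of_notMem hx]

lemma measurableSet_Omg {p : ℕ} {m : Fin p → ℕ}
    (g : ∀ i : Fin p, Fin (m i) → MvPolynomial (Fin n) ℝ) (i : Fin p) :
    MeasurableSet (Omg g i) := by
  have e1 : Omg g i = ⋂ j, {x | 0 ≤ eval x (g i j)} := by
    ext x
    simp [Omg, Set.mem_iInter, Set.mem_setOf_eq]
  rw [e1]
  exact MeasurableSet.iInter fun j =>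
    measurableSet_le measurable_const (MvPolynomial.continuous_eval _).measurable

section Main

variable {p : ℕ} {m : Fin p → ℕ}
variable (g : ∀ i : Fin p, Fin (m i) → MvPolynomial (Fin n) ℝ)
variable (μ : Measure (Fin n → ℝ))

/-- The candidate sequences equal weighted moment integrals. -/
lemma ystar_eq (i : Fin p) (α : MIdx n) :
    (∫ x, mono α x ∂(μ.withDensity (theta (Omg g) i))) = ∫ x, wR (Omg g) i x * mono α x ∂μ :=
  integral_withDensity_theta (measurableSet_Omg g) i (mono α)

lemma feas_main (hmom : ∀ α : MIdx n, Integrable (mono α) μ) (d : ℕ) :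
    QdFeas g (momSeq μ) d
      (fun i α => ∫ x, mono α x ∂(μ.withDensity (theta (Omg g) i))) := by
  classical
  set Ω := Omg g with hΩdef
  have hΩ : ∀ i, MeasurableSet (Ω i) := measurableSet_Omg g
  have hyw : (fun i α => ∫ x, mono α x ∂(μ.withDensity (theta Ω i)))
      = fun i (α : MIdx n) => ∫ x, wR Ω i x * mono α x ∂μ := by
    funext i α
    exact ystar_eq g μ i α
  have hint : ∀ i (α : MIdx n), Integrable (fun x => wR Ω i x * mono α x) μ :=
    fun i α => integrable_weight_mono hmom (measurable_wR hΩ i) (abs_wR_le_one Ω i) α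
  rw [hyw]
  refine ⟨?_, ?_, ?_⟩
  · -- moment matrix of μ minus sum
    set w0 : (Fin n → ℝ) → ℝ := fun x => 1 - ∑ i, wR Ω i x with hw0def
    have hsum_le : ∀ x, ∑ i, wR Ω i x ≤ 1 := by
      intro x
      rw [sum_wR]
      by_cases hx : x ∈ ⋃ i, Ω i
      · rw [Set.indicator_of_mem hx]
      · rw [Set.indicator_of_notMem hx]; norm_num
    have hsum_nonneg : ∀ x, 0 ≤ ∑ i, wR Ω i x := fun x =>
      Finset.sum_nonneg fun i _ => wR_nonneg Ω i x
    have hw0m : Measurable w0 :=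
      measurable_const.sub (Finset.measurable_sum _ fun i _ => measurable_wR hΩ i)
    have habs : ∀ x, |w0 x| ≤ 1 := fun x =>
      abs_le.2 ⟨by have := hsum_le x; simp only [hw0def]; linarith,
        by have := hsum_nonneg x; simp only [hw0def]; linarith⟩
    have hintw0 : ∀ α : MIdx n, Integrable (fun x => w0 x * mono α x) μ :=
      fun α => integrable_weight_mono hmom hw0m habs α
    have hseq : (fun α : MIdx n => momSeq μ α - ∑ i, ∫ x, wR Ω i x * mono α x ∂μ)
        = fun α : MIdx n => ∫ x, w0 x * mono α x ∂μ := by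
      funext α
      have e1 : (fun x => w0 x * mono α x)
          = fun x => mono α x - ∑ i, wR Ω i x * mono α x := by
        funext x
        simp only [hw0def]
        rw [sub_mul, one_mul, Finset.sum_mul]
      rw [e1, integral_sub (hmom α) (integrable_finset_sum _ fun i _ => hint i α),
        integral_finset_sum _ fun i _ => hint i α]
      rfl
    rw [hseq]
    exact posSemidef_momMat_weight (fun x => by have h1 := hsum_le x; simp only [hw0def]; linarith)
      hintw0 d
  · intro i
    exact posSemidef_momMat_weight (wR_nonneg Ω i) (hint i) d
  · intro i j
    rw [locMat_eq_momMat (hint i)]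
    refine posSemidef_momMat_weight ?_ ?_ _
    · intro x
      by_cases hx : x ∈ Ω i
      · exact mul_nonneg (wR_nonneg Ω i x) (hx j)
      · simp [wR, Set.indicator_of_notMem hx]
    · exact fun α => integrable_weight_eval_mono hmom (measurable_wR hΩ i)
        (abs_wR_le_one Ω i) (g i j) α

lemma obj_main (hmom : ∀ α : MIdx n, Integrable (mono α) μ) (f : MvPolynomial (Fin n) ℝ) :
    (∑ i, riesz (fun α => ∫ x, mono α x ∂(μ.withDensity (theta (Omg g) i))) f)
      = ∫ x, MvPolynomial.eval x f ∂(μ.restrict (⋃ i, Omg g i)) := by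
  classical
  set Ω := Omg g with hΩdef
  have hΩ : ∀ i, MeasurableSet (Ω i) := measurableSet_Omg g
  have hint : ∀ i (α : MIdx n), Integrable (fun x => wR Ω i x * mono α x) μ :=
    fun i α => integrable_weight_mono hmom (measurable_wR hΩ i) (abs_wR_le_one Ω i) α
  have hU : MeasurableSet (⋃ i, Ω i) := MeasurableSet.iUnion hΩ
  rw [← integral_indicator hU]
  have e0 : ∀ i, riesz (fun α => ∫ x, mono α x ∂(μ.withDensity (theta Ω i))) f
      = ∑ γ ∈ f.support, coeff γ f * ∫ x, wR Ω i x * mono (fun k => γ k) x ∂μ := by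
    intro i
    unfold riesz
    exact Finset.sum_congr rfl fun γ _ =>
      congrArg (fun t => coeff γ f * t) (ystar_eq g μ i fun k => γ k)
  simp_rw [e0]
  rw [Finset.sum_comm]
  have e1 : ∀ γ : Fin n →₀ ℕ,
      ∑ i, coeff γ f * ∫ x, wR Ω i x * mono (fun k => γ k) x ∂μ
      = coeff γ f * ∫ x, Set.indicator (⋃ i, Ω i) (fun _ => (1:ℝ)) x * mono (fun k => γ k) x ∂μ := by
    intro γ
    rw [← Finset.mul_sum, ← integral_finset_sum _ fun i _ => hint i _]
    congr 2
    funext x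
    rw [← Finset.sum_mul, sum_wR]
  simp_rw [e1]
  have hindint : ∀ α : MIdx n,
      Integrable (fun x => Set.indicator (⋃ i, Ω i) (fun _ => (1:ℝ)) x * mono α x) μ := by
    intro α
    refine integrable_weight_mono hmom ?_ ?_ α
    · exact Measurable.indicator measurable_const hU
    · intro x
      by_cases hx : x ∈ ⋃ i, Ω i
      · rw [Set.indicator_of_mem hx]; norm_num
      · rw [Set.indicator_of_notMem hx]; norm_num
  have e3 : ∀ γ : Fin n →₀ ℕ,
      coeff γ f * ∫ x, Set.indicator (⋃ i, Ω i) (fun _ => (1:ℝ)) x * mono (fun k => γ k) x ∂μ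
      = ∫ x, coeff γ f *
          (Set.indicator (⋃ i, Ω i) (fun _ => (1:ℝ)) x * mono (fun k => γ k) x) ∂μ :=
    fun γ => (integral_const_mul _ _).symm
  simp_rw [e3]
  rw [← integral_finset_sum _ fun γ _ => ((hindint _).const_mul _)]
  congr 1
  funext x
  by_cases hx : x ∈ ⋃ i, Ω i
  · rw [Set.indicator_of_mem hx (fun x => eval x f), eval_eq_sum x f]
    refine Finset.sum_congr rfl fun γ _ => ?_
    rw [Set.indicator_of_mem hx]
    ring
  · rw [Set.indicator_of_notMem hx (fun x => eval x f)]
    refine Finset.sum_eq_zero fun γ _ => ?_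
    rw [Set.indicator_of_notMem hx]
    ring

/-- Bounding the objective of any feasible solution. -/
lemma bdd_main (f : MvPolynomial (Fin n) ℝ) (d : ℕ) (hdf : f.totalDegree ≤ 2*d) :
    BddAbove {r | ∃ y : Fin p → MIdx n → ℝ,
      QdFeas g (momSeq μ) d y ∧ r = ∑ i, riesz (y i) f} := by
  classical
  have key : ∀ γ : MIdx n, ∃ C : ℝ, mdeg γ ≤ 2*d →
      ∀ y : Fin p → MIdx n → ℝ, QdFeas g (momSeq μ) d y → ∑ i, |y i γ| ≤ C := by
    intro γ
    by_cases hγ : mdeg γ ≤ 2*d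
    · obtain ⟨a, b, hab, ha, hb⟩ := split_exists d (mdeg γ) γ le_rfl hγ
      set A : {α : MIdx n // mdeg α ≤ d} := ⟨a, ha⟩
      set B : {α : MIdx n // mdeg α ≤ d} := ⟨b, hb⟩
      refine ⟨(momSeq μ (fun i => a i + a i) + momSeq μ (fun i => b i + b i)) / 2,
        fun _ y hy => ?_⟩
      obtain ⟨h1, h2, _⟩ := hy
      have hentry : ∀ i : Fin p, |y i γ| ≤ (y i (fun k => a k + a k) + y i (fun k => b k + b k)) / 2 := by
        intro i
        have hg : y i γ = momMat d (y i) A B := by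
          simp only [momMat]
          congr 1
          funext k
          exact (hab k).symm
        have := psd_abs_entry_le (h2 i) A B
        rw [hg]
        exact this
      have hdiag : ∀ c : {α : MIdx n // mdeg α ≤ d},
          ∑ i, y i (fun k => c.1 k + c.1 k) ≤ momSeq μ (fun k => c.1 k + c.1 k) := by
        intro c
        have := psd_diag_nonneg h1 c
        simp only [momMat] at this
        linarith
      calc ∑ i, |y i γ|
          ≤ ∑ i, (y i (fun k => a k + a k) + y i (fun k => b k + b k)) / 2 :=
            Finset.sum_le_sum fun i _ => hentry i
        _ = ((∑ i, y i (fun k => a k + a k)) + ∑ i, y i (fun k => b k + b k)) / 2 := by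
            rw [← Finset.sum_add_distrib, Finset.sum_div]
        _ ≤ (momSeq μ (fun k => a k + a k) + momSeq μ (fun k => b k + b k)) / 2 := by
            have h3 := hdiag A
            have h4 := hdiag B
            simp only [A, B] at h3 h4
            linarith
    · exact ⟨0, fun h => absurd h hγ⟩
  choose C hC using key
  refine ⟨∑ γ ∈ f.support, |coeff γ f| * C (fun k => γ k), ?_⟩
  rintro r ⟨y, hy, rfl⟩
  have hdegs : ∀ γ ∈ f.support, mdeg (fun k => (γ : Fin n →₀ ℕ) k) ≤ 2*d := by
    intro γ hγ
    rw [mdeg_coe]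
    exact le_trans (le_totalDegree hγ) hdf
  calc ∑ i, riesz (y i) f
      = ∑ γ ∈ f.support, coeff γ f * ∑ i, y i (fun k => γ k) := by
        unfold riesz
        rw [Finset.sum_comm]
        exact Finset.sum_congr rfl fun γ _ => by rw [Finset.mul_sum]
    _ ≤ ∑ γ ∈ f.support, |coeff γ f * ∑ i, y i (fun k => γ k)| :=
        Finset.sum_le_sum fun γ _ => le_abs_self _
    _ ≤ ∑ γ ∈ f.support, |coeff γ f| * C (fun k => γ k) := by
        refine Finset.sum_le_sum fun γ hγ => ?_
        rw [abs_mul]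
        refine mul_le_mul_of_nonneg_left ?_ (abs_nonneg _)
        refine le_trans (Finset.abs_sum_le_sum_abs _ _) ?_
        exact hC _ (hdegs γ hγ) y hy

lemma feas_anti {z : MIdx n → ℝ} {d : ℕ} {y : Fin p → MIdx n → ℝ}
    (h : QdFeas g z (d+1) y) : QdFeas g z d y := by
  obtain ⟨h1, h2, h3⟩ := h
  refine ⟨?_, fun i => ?_, fun i j => ?_⟩
  · exact h1.submatrix fun a : {α : MIdx n // mdeg α ≤ d} =>
      (⟨a.1, a.2.trans (Nat.le_succ d)⟩ : {α : MIdx n // mdeg α ≤ d+1})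
  · exact (h2 i).submatrix fun a : {α : MIdx n // mdeg α ≤ d} =>
      (⟨a.1, a.2.trans (Nat.le_succ d)⟩ : {α : MIdx n // mdeg α ≤ d+1})
  · exact (h3 i j).submatrix fun a : {α : MIdx n // mdeg α ≤ d - halfDegUp (g i j)} =>
      (⟨a.1, a.2.trans (Nat.sub_le_sub_right (Nat.le_succ d) _)⟩ :
        {α : MIdx n // mdeg α ≤ d + 1 - halfDegUp (g i j)})

end Main

end Aux

open MvPolynomial in
/-- For `μ` with all moments finite and `d ≥ max(d_0, ⌈deg f/2⌉)`:
(b) the truncated moment sequences of the measures `φ*_i = θ_i·μ` form a feasible solution of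
`Q_d` with objective value `∫_Ω f dμ`, hence `ρ^f_d ≥ ∫_Ω f dμ`; (a) `ρ^f_{d+1} ≤ ρ^f_d`. -/
theorem stmt4 {n p : ℕ} {m : Fin p → ℕ}
    (g : ∀ i : Fin p, Fin (m i) → MvPolynomial (Fin n) ℝ)
    (μ : Measure (Fin n → ℝ))
    (hmom : ∀ α : MIdx n, Integrable (mono α) μ)
    (f : MvPolynomial (Fin n) ℝ)
    (d : ℕ)
    (hd1 : ∀ i j, halfDegUp (g i j) ≤ d)
    (hd2 : (f.totalDegree + 1) / 2 ≤ d) :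
    (QdFeas g (momSeq μ) d
        (fun i α => ∫ x, mono α x ∂(μ.withDensity (theta (Omg g) i))) ∧
      (∑ i, riesz (fun α => ∫ x, mono α x ∂(μ.withDensity (theta (Omg g) i))) f)
        = ∫ x, MvPolynomial.eval x f ∂(μ.restrict (⋃ i, Omg g i))) ∧
    QdVal g (momSeq μ) f (d + 1) ≤ QdVal g (momSeq μ) f d ∧
    ∫ x, MvPolynomial.eval x f ∂(μ.restrict (⋃ i, Omg g i)) ≤ QdVal g (momSeq μ) f d := by
  have hfeas := feas_main g μ hmom d
  have hobj := obj_main g μ hmom f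
  have hdf : f.totalDegree ≤ 2*d := by omega
  have hbdd := bdd_main g μ f d hdf
  refine ⟨⟨hfeas, hobj⟩, ?_, ?_⟩
  · unfold QdVal
    refine csSup_le_csSup hbdd ?_ ?_
    · exact ⟨_, ⟨_, feas_main g μ hmom (d+1), rfl⟩⟩
    · rintro r ⟨y, hy, rfl⟩
      exact ⟨y, feas_anti g hy, rfl⟩
  · rw [← hobj]
    exact le_csSup hbdd ⟨_, hfeas, rfl⟩
end
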